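/- arXiv:math/0205041 — 5 statements merged into one kernel-verified Lean document; each statement's English description precedes it below -/
import Mathlib

section
/- For every positive integer n and every (Z₀,Z₁,Z₂) ∈ ℂ³, one has Σ_{(i₀,i₁,i₂,j₀,j₁,k₀,k₂) ∈ S_n} |Z₀|^{2(i₀+j₀+k₀)} |Z₁|^{2(i₁+j₁)} |Z₂|^{2(i₂+k₂)} ≤ ((n+1)³(n+2)/2) · D(Z)ⁿ. Consequently, for every (Z₀,Z₁,Z₂) ≠ (0,0,0), (1/n)·log( Σ_{(i₀,i₁,i₂,j₀,j₁,k₀,k₂) ∈ S_n} |Z₀|^{2(i₀+j₀+k₀)} |Z₁|^{2(i₁+j₁)} |Z₂|^{2(i₂+k₂)} / D(Z)ⁿ ) ≤ (1/n)·log((n+1)³(n+2)/2), a bound independent of Z and uniformly bounded in n. -/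
open scoped BigOperators

/-- The index set `S_n`: tuples `(i₀,i₁,i₂,j₀,j₁,k₀,k₂)` of nonnegative integers
with `i₀+i₁+i₂ = n`, `j₀+j₁ = n`, `k₀+k₂ = n`. -/
def indexSet (n : ℕ) : Finset (ℕ × ℕ × ℕ × ℕ × ℕ × ℕ × ℕ) :=
  (Finset.range (n + 1) ×ˢ Finset.range (n + 1) ×ˢ Finset.range (n + 1) ×ˢ
      Finset.range (n + 1) ×ˢ Finset.range (n + 1) ×ˢ Finset.range (n + 1) ×ˢ
      Finset.range (n + 1)).filter
    fun t => t.1 + t.2.1 + t.2.2.1 = n ∧ t.2.2.2.1 + t.2.2.2.2.1 = n ∧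
      t.2.2.2.2.2.1 + t.2.2.2.2.2.2 = n

/-- `D(Z) = (|Z₀|²+|Z₁|²+|Z₂|²)(|Z₀|²+|Z₁|²)(|Z₀|²+|Z₂|²)`. -/
noncomputable def Dfun (Z : ℂ × ℂ × ℂ) : ℝ :=
  (‖Z.1‖ ^ 2 + ‖Z.2.1‖ ^ 2 + ‖Z.2.2‖ ^ 2) *
    (‖Z.1‖ ^ 2 + ‖Z.2.1‖ ^ 2) *
    (‖Z.1‖ ^ 2 + ‖Z.2.2‖ ^ 2)

/-- The weighted sum of monomial norms over `S_n`. -/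
noncomputable def weightedSum (n : ℕ) (Z : ℂ × ℂ × ℂ) : ℝ :=
  ∑ t ∈ indexSet n,
    ‖Z.1‖ ^ (2 * (t.1 + t.2.2.2.1 + t.2.2.2.2.2.1)) *
      ‖Z.2.1‖ ^ (2 * (t.2.1 + t.2.2.2.2.1)) *
      ‖Z.2.2‖ ^ (2 * (t.2.2.1 + t.2.2.2.2.2.2))


open Finset in
private lemma binom_le {a b : ℝ} (ha : 0 ≤ a) (hb : 0 ≤ b) (n : ℕ) :
    ∑ p ∈ Finset.HasAntidiagonal.antidiagonal n, a ^ p.1 * b ^ p.2 ≤ (a + b) ^ n := by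
  rw [Finset.Nat.sum_antidiagonal_eq_sum_range_succ_mk, add_pow]
  apply Finset.sum_le_sum
  intro k hk
  have hk' : k ≤ n := Finset.mem_range_succ_iff.mp hk
  have h1 : (1 : ℝ) ≤ (n.choose k : ℝ) := by
    exact_mod_cast Nat.one_le_iff_ne_zero.mpr (Nat.choose_pos hk').ne'
  have h2 : 0 ≤ a ^ k * b ^ (n - k) :=
    mul_nonneg (pow_nonneg ha k) (pow_nonneg hb (n - k))
  nlinarith

open Finset in
private lemma trinom_le {a b c : ℝ} (ha : 0 ≤ a) (hb : 0 ≤ b) (hc : 0 ≤ c) (n : ℕ) :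
    ∑ p ∈ Finset.HasAntidiagonal.antidiagonal n, ∑ q ∈ Finset.HasAntidiagonal.antidiagonal p.2,
      a ^ p.1 * (b ^ q.1 * c ^ q.2) ≤ (a + b + c) ^ n := by
  have step1 : ∑ p ∈ Finset.HasAntidiagonal.antidiagonal n, ∑ q ∈ Finset.HasAntidiagonal.antidiagonal p.2,
      a ^ p.1 * (b ^ q.1 * c ^ q.2) ≤
      ∑ p ∈ Finset.HasAntidiagonal.antidiagonal n, a ^ p.1 * (b + c) ^ p.2 := by
    apply Finset.sum_le_sum
    intro p _
    rw [← Finset.mul_sum]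
    exact mul_le_mul_of_nonneg_left (binom_le hb hc p.2) (pow_nonneg ha p.1)
  calc _ ≤ ∑ p ∈ Finset.HasAntidiagonal.antidiagonal n, a ^ p.1 * (b + c) ^ p.2 := step1
    _ ≤ (a + (b + c)) ^ n := binom_le ha (by positivity) n
    _ = (a + b + c) ^ n := by ring

private lemma weightedSum_eq (n : ℕ) (Z : ℂ × ℂ × ℂ) :
    weightedSum n Z =
      (∑ x ∈ (Finset.HasAntidiagonal.antidiagonal n).sigma (fun p => Finset.HasAntidiagonal.antidiagonal p.2),
        (‖Z.1‖ ^ 2) ^ x.1.1 *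
          ((‖Z.2.1‖ ^ 2) ^ x.2.1 * (‖Z.2.2‖ ^ 2) ^ x.2.2)) *
      (∑ p ∈ Finset.HasAntidiagonal.antidiagonal n,
        (‖Z.1‖ ^ 2) ^ p.1 * (‖Z.2.1‖ ^ 2) ^ p.2) *
      (∑ p ∈ Finset.HasAntidiagonal.antidiagonal n,
        (‖Z.1‖ ^ 2) ^ p.1 * (‖Z.2.2‖ ^ 2) ^ p.2) := by
  set A := ‖Z.1‖ ^ 2
  set B := ‖Z.2.1‖ ^ 2
  set C := ‖Z.2.2‖ ^ 2
  have hrhs : (∑ x ∈ (Finset.HasAntidiagonal.antidiagonal n).sigma (fun p => Finset.HasAntidiagonal.antidiagonal p.2),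
        A ^ x.1.1 * (B ^ x.2.1 * C ^ x.2.2)) *
      (∑ p ∈ Finset.HasAntidiagonal.antidiagonal n, A ^ p.1 * B ^ p.2) *
      (∑ p ∈ Finset.HasAntidiagonal.antidiagonal n, A ^ p.1 * C ^ p.2)
    = ∑ k ∈ Finset.HasAntidiagonal.antidiagonal n, ∑ j ∈ Finset.HasAntidiagonal.antidiagonal n,
      ∑ x ∈ (Finset.HasAntidiagonal.antidiagonal n).sigma (fun p => Finset.HasAntidiagonal.antidiagonal p.2),
        A ^ x.1.1 * (B ^ x.2.1 * C ^ x.2.2) * (A ^ j.1 * B ^ j.2) * (A ^ k.1 * C ^ k.2) := by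
    simp only [Finset.sum_mul, Finset.mul_sum]
  rw [hrhs]
  rw [show (∑ k ∈ Finset.HasAntidiagonal.antidiagonal n, ∑ j ∈ Finset.HasAntidiagonal.antidiagonal n,
      ∑ x ∈ (Finset.HasAntidiagonal.antidiagonal n).sigma (fun p => Finset.HasAntidiagonal.antidiagonal p.2),
        A ^ x.1.1 * (B ^ x.2.1 * C ^ x.2.2) * (A ^ j.1 * B ^ j.2) * (A ^ k.1 * C ^ k.2))
    = ∑ y ∈ Finset.HasAntidiagonal.antidiagonal n ×ˢ (Finset.HasAntidiagonal.antidiagonal n ×ˢ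
        ((Finset.HasAntidiagonal.antidiagonal n).sigma (fun p => Finset.HasAntidiagonal.antidiagonal p.2))),
        A ^ y.2.2.1.1 * (B ^ y.2.2.2.1 * C ^ y.2.2.2.2) * (A ^ y.2.1.1 * B ^ y.2.1.2) *
          (A ^ y.1.1 * C ^ y.1.2) from by
      rw [Finset.sum_product]
      exact Finset.sum_congr rfl fun x _ => by rw [Finset.sum_product]]
  unfold weightedSum
  apply Finset.sum_nbij'
    (i := fun t => ((t.2.2.2.2.2.1, t.2.2.2.2.2.2), (t.2.2.2.1, t.2.2.2.2.1),
      ⟨(t.1, t.2.1 + t.2.2.1), (t.2.1, t.2.2.1)⟩))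
    (j := fun y => (y.2.2.1.1, y.2.2.2.1, y.2.2.2.2, y.2.1.1, y.2.1.2, y.1.1, y.1.2))
  · intro t ht
    simp only [indexSet, Finset.mem_filter, Finset.mem_product, Finset.mem_range] at ht
    simp only [Finset.mem_product, Finset.mem_sigma, Finset.HasAntidiagonal.mem_antidiagonal]
    obtain ⟨-, h1, h2, h3⟩ := ht
    exact ⟨h3, h2, by omega, trivial⟩
  · intro y hy
    simp only [Finset.mem_product, Finset.mem_sigma, Finset.HasAntidiagonal.mem_antidiagonal] at hy
    simp only [indexSet, Finset.mem_filter, Finset.mem_product, Finset.mem_range]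
    omega
  · intro t _; rfl
  · intro y hy
    simp only [Finset.mem_product, Finset.mem_sigma, Finset.HasAntidiagonal.mem_antidiagonal] at hy
    obtain ⟨⟨k0, k2⟩, ⟨j0, j1⟩, ⟨⟨i0, m⟩, i1, i2⟩⟩ := y
    simp only at hy ⊢
    have hm : i1 + i2 = m := hy.2.2.2
    subst hm
    rfl
  · intro t ht
    simp only [indexSet, Finset.mem_filter, Finset.mem_product, Finset.mem_range] at ht
    simp only [pow_mul]
    ring

private lemma weightedSum_le_Dpow (n : ℕ) (Z : ℂ × ℂ × ℂ) :
    weightedSum n Z ≤ Dfun Z ^ n := by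
  set A := ‖Z.1‖ ^ 2 with hA
  set B := ‖Z.2.1‖ ^ 2 with hB
  set C := ‖Z.2.2‖ ^ 2 with hC
  have hA0 : 0 ≤ A := by positivity
  have hB0 : 0 ≤ B := by positivity
  have hC0 : 0 ≤ C := by positivity
  rw [weightedSum_eq]
  have h3 : ∑ x ∈ (Finset.HasAntidiagonal.antidiagonal n).sigma (fun p => Finset.HasAntidiagonal.antidiagonal p.2),
      A ^ x.1.1 * (B ^ x.2.1 * C ^ x.2.2) ≤ (A + B + C) ^ n := by
    have h3x := trinom_le hA0 hB0 hC0 n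
    rw [Finset.sum_sigma' (Finset.HasAntidiagonal.antidiagonal n) (fun p => Finset.HasAntidiagonal.antidiagonal p.2)
      (fun p q => A ^ p.1 * (B ^ q.1 * C ^ q.2))] at h3x
    exact h3x
  have h2b : ∑ p ∈ Finset.HasAntidiagonal.antidiagonal n, A ^ p.1 * B ^ p.2 ≤ (A + B) ^ n :=
    binom_le hA0 hB0 n
  have h2c : ∑ p ∈ Finset.HasAntidiagonal.antidiagonal n, A ^ p.1 * C ^ p.2 ≤ (A + C) ^ n :=
    binom_le hA0 hC0 n
  have hs3 : 0 ≤ ∑ x ∈ (Finset.HasAntidiagonal.antidiagonal n).sigma (fun p => Finset.HasAntidiagonal.antidiagonal p.2),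
      A ^ x.1.1 * (B ^ x.2.1 * C ^ x.2.2) :=
    Finset.sum_nonneg fun x _ => by positivity
  have hs2b : 0 ≤ ∑ p ∈ Finset.HasAntidiagonal.antidiagonal n, A ^ p.1 * B ^ p.2 :=
    Finset.sum_nonneg fun p _ => by positivity
  have hs2c : 0 ≤ ∑ p ∈ Finset.HasAntidiagonal.antidiagonal n, A ^ p.1 * C ^ p.2 :=
    Finset.sum_nonneg fun p _ => by positivity
  have hD : Dfun Z ^ n = (A + B + C) ^ n * (A + B) ^ n * (A + C) ^ n := by
    rw [Dfun, mul_pow, mul_pow]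
  rw [hD]
  have h1 : (0:ℝ) ≤ (A + B + C) ^ n := by positivity
  have h2 : (0:ℝ) ≤ (A + B) ^ n := by positivity
  exact mul_le_mul (mul_le_mul h3 h2b hs2b h1) h2c hs2c (mul_nonneg h1 h2)

theorem weightedSum_le_and_log_bound :
    (∀ n : ℕ, 0 < n → ∀ Z : ℂ × ℂ × ℂ,
      weightedSum n Z ≤ ((n + 1) ^ 3 * (n + 2) / 2 : ℝ) * Dfun Z ^ n ∧
      (Z ≠ 0 →
        (1 / (n : ℝ)) * Real.log (weightedSum n Z / Dfun Z ^ n) ≤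
          (1 / (n : ℝ)) * Real.log ((n + 1) ^ 3 * (n + 2) / 2 : ℝ))) ∧
    ∃ C : ℝ, ∀ n : ℕ, 0 < n →
      (1 / (n : ℝ)) * Real.log ((n + 1) ^ 3 * (n + 2) / 2 : ℝ) ≤ C := by
  constructor
  · intro n hn Z
    have hn1 : (1:ℝ) ≤ (n:ℝ) := by exact_mod_cast hn
    have h0 : (0:ℝ) ≤ (n:ℝ) := Nat.cast_nonneg n
    have hconst : (1:ℝ) ≤ ((n + 1) ^ 3 * (n + 2) / 2 : ℝ) := by
      nlinarith [pow_nonneg h0 4, pow_nonneg h0 3, sq_nonneg (n:ℝ), h0]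
    have hmain := weightedSum_le_Dpow n Z
    have hD : 0 ≤ Dfun Z := by
      unfold Dfun; positivity
    have hDn : (0:ℝ) ≤ Dfun Z ^ n := pow_nonneg hD n
    have h1 : weightedSum n Z ≤ ((n + 1) ^ 3 * (n + 2) / 2 : ℝ) * Dfun Z ^ n :=
      le_trans hmain (le_mul_of_one_le_left hDn hconst)
    refine ⟨h1, fun _ => ?_⟩
    have hws : 0 ≤ weightedSum n Z := by
      unfold weightedSum
      exact Finset.sum_nonneg fun t _ => by positivity
    have hq : weightedSum n Z / Dfun Z ^ n ≤ ((n + 1) ^ 3 * (n + 2) / 2 : ℝ) := by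
      rcases eq_or_lt_of_le hDn with h | h
      · rw [← h, div_zero]; linarith
      · rw [div_le_iff₀ h]; linarith [mul_le_mul_of_nonneg_right hconst hDn]
    have hq0 : 0 ≤ weightedSum n Z / Dfun Z ^ n := div_nonneg hws hDn
    apply mul_le_mul_of_nonneg_left _ (by positivity : (0:ℝ) ≤ 1 / (n:ℝ))
    rcases eq_or_lt_of_le hq0 with h | h
    · rw [← h, Real.log_zero]
      exact Real.log_nonneg hconst
    · exact Real.log_le_log h hq
  · refine ⟨4 * Real.log 3, fun n hn => ?_⟩
    have hn1 : (1:ℝ) ≤ (n:ℝ) := by exact_mod_cast hn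
    have h32 : (1:ℝ) + (n:ℝ) * 2 ≤ 3 ^ n := by
      have := one_add_mul_le_pow (show (-2:ℝ) ≤ 2 by norm_num) n
      norm_num at this
      linarith
    have hb : ((n + 1) ^ 3 * (n + 2) / 2 : ℝ) ≤ ((3:ℝ) ^ n) ^ 4 := by
      have h1 : ((n:ℝ) + 2) ≤ 3 ^ n := by linarith
      have h2 : ((n:ℝ) + 1) ≤ 3 ^ n := by linarith
      have h0 : (0:ℝ) ≤ (n:ℝ) + 1 := by linarith
      have h0' : (0:ℝ) ≤ (n:ℝ) + 2 := by linarith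
      calc ((n + 1) ^ 3 * (n + 2) / 2 : ℝ) ≤ ((n:ℝ) + 1) ^ 3 * ((n:ℝ) + 2) := by nlinarith [pow_nonneg h0 3]
        _ ≤ ((3:ℝ) ^ n) ^ 3 * (3:ℝ) ^ n := by
            apply mul_le_mul _ h1 h0' (by positivity)
            exact pow_le_pow_left₀ h0 h2 3
        _ = ((3:ℝ) ^ n) ^ 4 := by ring
    have hpos : (0:ℝ) < ((n + 1) ^ 3 * (n + 2) / 2 : ℝ) := by positivity
    have hlog : Real.log ((n + 1) ^ 3 * (n + 2) / 2 : ℝ) ≤ (n:ℝ) * (4 * Real.log 3) := by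
      calc Real.log ((n + 1) ^ 3 * (n + 2) / 2 : ℝ) ≤ Real.log (((3:ℝ) ^ n) ^ 4) :=
            Real.log_le_log hpos hb
        _ = (4:ℕ) * ((n:ℕ) * Real.log 3) := by rw [Real.log_pow, Real.log_pow]
        _ = (n:ℝ) * (4 * Real.log 3) := by push_cast; ring
    have hnne : (n:ℝ) ≠ 0 := by linarith
    rw [div_mul_eq_mul_div, one_mul] at *
    calc Real.log ((n + 1) ^ 3 * (n + 2) / 2 : ℝ) / (n:ℝ) ≤ ((n:ℝ) * (4 * Real.log 3)) / (n:ℝ) := by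
          apply div_le_div_of_nonneg_right hlog (by linarith)
      _ = 4 * Real.log 3 := by field_simp
end

section
/- For every α ∈ (0, 1/3) and every μ ∈ [0, 3], the function (w₀, w₁) ↦ |w₀|^{−2αμ} · |w₁|^{−(3−μ)α} · (|w₀|² + |w₁|²)^{−(1−α)} is integrable on the set {(w₀,w₁) ∈ ℂ² : 0 < |w₀| < 1, 0 < |w₁| < 1} with respect to Lebesgue measure on ℂ² (identifying ℂ² with ℝ⁴). -/
set_option maxHeartbeats 1000000

open MeasureTheory Set

lemma aux_abs_rpow_integrableOn_Ioo {r : ℝ} (hr : -1 < r) :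
    IntegrableOn (fun x : ℝ => |x| ^ r) (Set.Ioo (-1 : ℝ) 1) volume := by
  have h01 : IntervalIntegrable (fun x : ℝ => x ^ r) volume 0 1 :=
    intervalIntegral.intervalIntegrable_rpow' hr
  have hpos : IntegrableOn (fun x : ℝ => |x| ^ r) (Set.Ioc (0 : ℝ) 1) volume := by
    have := (intervalIntegrable_iff_integrableOn_Ioc_of_le (by norm_num : (0:ℝ) ≤ 1)).1 h01
    exact this.congr_fun (fun x hx => by rw [abs_of_pos hx.1]) measurableSet_Ioc
  have hneg : IntegrableOn (fun x : ℝ => |x| ^ r) (Set.Ioc (-1 : ℝ) 0) volume := by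
    have h2 : IntervalIntegrable (fun x : ℝ => |x| ^ r) volume 0 1 := by
      rw [intervalIntegrable_iff_integrableOn_Ioc_of_le (by norm_num : (0:ℝ) ≤ 1)]
      exact hpos
    have h3 : IntervalIntegrable (fun x : ℝ => |(-x)| ^ r) volume (-1) (-0) :=
      ((IntervalIntegrable.iff_comp_neg (f := fun x : ℝ => |x| ^ r) (by simp)).1 h2).symm
    simp only [abs_neg, neg_zero] at h3
    rw [intervalIntegrable_iff_integrableOn_Ioc_of_le (by norm_num : (-1:ℝ) ≤ 0)] at h3
    exact h3
  exact (hneg.union hpos).mono_set (fun x hx => by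
    rcases le_or_gt x 0 with h | h
    · exact Or.inl ⟨hx.1, h⟩
    · exact Or.inr ⟨h, le_of_lt hx.2⟩)

lemma aux_complex_rpow_integrableOn {q : ℝ} (hq : -2 < q) (hq0 : q ≤ 0) :
    IntegrableOn (fun z : ℂ => ‖z‖ ^ q) {z : ℂ | ‖z‖ < 1} volume := by
  set e := Complex.measurableEquivRealProd with he
  have hvol : MeasurePreserving e volume volume := Complex.volume_preserving_equiv_real_prod
  have hemb : MeasurableEmbedding e := e.measurableEmbedding
  set f : ℝ × ℝ → ℝ := fun p => Real.sqrt (p.1 ^ 2 + p.2 ^ 2) ^ q with hf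
  set s : Set (ℝ × ℝ) := {p | Real.sqrt (p.1 ^ 2 + p.2 ^ 2) < 1} with hs
  have habs : ∀ z : ℂ, ‖z‖ = Real.sqrt (z.re ^ 2 + z.im ^ 2) := fun z => by
    rw [Complex.norm_def, Complex.normSq_apply]; ring_nf
  have key : IntegrableOn f s volume := by
    have hsub : s ⊆ Set.Ioo (-1:ℝ) 1 ×ˢ Set.Ioo (-1:ℝ) 1 := by
      intro p hp
      simp only [hs, Set.mem_setOf_eq] at hp
      have hsq : p.1 ^ 2 + p.2 ^ 2 < 1 := by
        nlinarith [Real.sq_sqrt (by positivity : (0:ℝ) ≤ p.1 ^ 2 + p.2 ^ 2),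
          Real.sqrt_nonneg (p.1 ^ 2 + p.2 ^ 2)]
      constructor
      · have : |p.1| < 1 := by nlinarith [sq_abs p.1, abs_nonneg p.1, sq_nonneg p.2]
        exact abs_lt.1 this
      · have : |p.2| < 1 := by nlinarith [sq_abs p.2, abs_nonneg p.2, sq_nonneg p.1]
        exact abs_lt.1 this
    have hg : IntegrableOn (fun p : ℝ × ℝ => |p.1| ^ (q/2) * |p.2| ^ (q/2))
        (Set.Ioo (-1:ℝ) 1 ×ˢ Set.Ioo (-1:ℝ) 1) volume := by
      rw [IntegrableOn, Measure.volume_eq_prod, ← Measure.prod_restrict]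
      exact (aux_abs_rpow_integrableOn_Ioo (by linarith)).mul_prod
        (aux_abs_rpow_integrableOn_Ioo (by linarith))
    have hmf : Measurable f := by
      have hsqrt : Measurable fun p : ℝ × ℝ => Real.sqrt (p.1 ^ 2 + p.2 ^ 2) :=
        (Real.continuous_sqrt.comp (by continuity)).measurable
      exact hsqrt.pow measurable_const
    have hnull1 : volume {p : ℝ × ℝ | p.1 = 0} = 0 := by
      have hset : {p : ℝ × ℝ | p.1 = 0} = ({(0:ℝ)} : Set ℝ) ×ˢ (Set.univ : Set ℝ) := by
        ext p
        simp only [Set.mem_setOf_eq, Set.mem_prod, Set.mem_singleton_iff, Set.mem_univ, and_true, true_and]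
      rw [hset, Measure.volume_eq_prod, Measure.prod_prod]
      simp
    have hnull2 : volume {p : ℝ × ℝ | p.2 = 0} = 0 := by
      have hset : {p : ℝ × ℝ | p.2 = 0} = (Set.univ : Set ℝ) ×ˢ ({(0:ℝ)} : Set ℝ) := by
        ext p
        simp only [Set.mem_setOf_eq, Set.mem_prod, Set.mem_singleton_iff, Set.mem_univ, and_true, true_and]
      rw [hset, Measure.volume_eq_prod, Measure.prod_prod]
      simp
    have hax : ∀ᵐ p : ℝ × ℝ ∂(volume.restrict s), p.1 ≠ 0 ∧ p.2 ≠ 0 := by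
      refine ae_restrict_of_ae ?_
      have h1 : ∀ᵐ p : ℝ × ℝ, p.1 ≠ 0 := by
        rw [ae_iff]; simpa using hnull1
      have h2 : ∀ᵐ p : ℝ × ℝ, p.2 ≠ 0 := by
        rw [ae_iff]; simpa using hnull2
      filter_upwards [h1, h2] with p hp1 hp2 using ⟨hp1, hp2⟩
    refine Integrable.mono (hg.mono_set hsub) hmf.aestronglyMeasurable ?_
    filter_upwards [hax] with p hp
    obtain ⟨hp1, hp2⟩ := hp
    have hx : 0 < |p.1| := abs_pos.2 hp1
    have hy : 0 < |p.2| := abs_pos.2 hp2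
    have hle : |p.1| * |p.2| ≤ p.1 ^ 2 + p.2 ^ 2 := by
      nlinarith [sq_abs p.1, sq_abs p.2, sq_nonneg (|p.1| - |p.2|)]
    have hsq : Real.sqrt (|p.1| * |p.2|) ≤ Real.sqrt (p.1 ^ 2 + p.2 ^ 2) :=
      Real.sqrt_le_sqrt hle
    have h0 : 0 < Real.sqrt (|p.1| * |p.2|) := Real.sqrt_pos.2 (by positivity)
    have hkey : Real.sqrt (p.1 ^ 2 + p.2 ^ 2) ^ q ≤ Real.sqrt (|p.1| * |p.2|) ^ q :=
      Real.rpow_le_rpow_of_nonpos h0 hsq hq0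
    have heq : Real.sqrt (|p.1| * |p.2|) ^ q = |p.1| ^ (q/2) * |p.2| ^ (q/2) := by
      rw [Real.sqrt_eq_rpow, ← Real.rpow_mul (by positivity),
        Real.mul_rpow hx.le hy.le]
      ring_nf
    rw [Real.norm_eq_abs, Real.norm_eq_abs,
      abs_of_nonneg (Real.rpow_nonneg (Real.sqrt_nonneg _) q),
      abs_of_nonneg (by positivity)]
    calc f p ≤ Real.sqrt (|p.1| * |p.2|) ^ q := hkey
    _ = |p.1| ^ (q/2) * |p.2| ^ (q/2) := heq
  have hset : {z : ℂ | ‖z‖ < 1} = e ⁻¹' s := by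
    ext z
    simp only [Set.mem_setOf_eq, Set.mem_preimage, hs, he,
      Complex.measurableEquivRealProd_apply]
    rw [habs z]
  have hfun : (fun z : ℂ => ‖z‖ ^ q) = f ∘ e := by
    ext z
    simp only [Function.comp_apply, hf, he, Complex.measurableEquivRealProd_apply]
    rw [habs z]
  rw [hset, hfun]
  exact (hvol.integrableOn_comp_preimage hemb).2 key


theorem integrable_patch_U2 (α μ : ℝ) (hα : 0 < α) (hα' : α < 1 / 3)
    (hμ : 0 ≤ μ) (hμ' : μ ≤ 3) :
    IntegrableOn
      (fun w : ℂ × ℂ =>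
        ‖w.1‖ ^ (-(2 * α * μ)) * ‖w.2‖ ^ (-((3 - μ) * α)) *
          (‖w.1‖ ^ 2 + ‖w.2‖ ^ 2) ^ (-(1 - α)))
      {w : ℂ × ℂ | 0 < ‖w.1‖ ∧ ‖w.1‖ < 1 ∧
        0 < ‖w.2‖ ∧ ‖w.2‖ < 1} volume := by
  have hαμ : α * μ < 1 := by nlinarith
  have h1α : (0:ℝ) < 1 - α := by linarith
  set S₁ : Set ℂ := {z : ℂ | 0 < ‖z‖ ∧ ‖z‖ < 1} with hS₁
  have hS₁m : MeasurableSet S₁ := by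
    have : S₁ = (fun z : ℂ => ‖z‖) ⁻¹' (Set.Ioo 0 1) := rfl
    rw [this]
    exact continuous_norm.measurable measurableSet_Ioo
  have hSeq : {w : ℂ × ℂ | 0 < ‖w.1‖ ∧ ‖w.1‖ < 1 ∧
      0 < ‖w.2‖ ∧ ‖w.2‖ < 1} = S₁ ×ˢ S₁ := by
    ext w
    simp only [Set.mem_setOf_eq, Set.mem_prod, hS₁]
    tauto
  have hint1 : IntegrableOn (fun z : ℂ => ‖z‖ ^ (-(1 + α * μ))) S₁ volume :=
    (aux_complex_rpow_integrableOn (by linarith) (by nlinarith)).mono_set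
      (fun z hz => hz.2)
  have hint2 : IntegrableOn (fun z : ℂ => ‖z‖ ^ (-(1 + α))) S₁ volume :=
    (aux_complex_rpow_integrableOn (by linarith) (by linarith)).mono_set
      (fun z hz => hz.2)
  have hg : IntegrableOn
      (fun w : ℂ × ℂ => ‖w.1‖ ^ (-(1 + α * μ)) * ‖w.2‖ ^ (-(1 + α)))
      (S₁ ×ˢ S₁) volume := by
    rw [IntegrableOn, Measure.volume_eq_prod, ← Measure.prod_restrict]
    exact hint1.mul_prod hint2
  rw [hSeq]
  refine Integrable.mono hg ?_ ?_
  · apply Measurable.aestronglyMeasurable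
    have habs1 : Measurable fun w : ℂ × ℂ => ‖w.1‖ :=
      (continuous_norm.comp continuous_fst).measurable
    have habs2 : Measurable fun w : ℂ × ℂ => ‖w.2‖ :=
      (continuous_norm.comp continuous_snd).measurable
    exact ((habs1.pow measurable_const).mul (habs2.pow measurable_const)).mul
      (((habs1.pow measurable_const).add (habs2.pow measurable_const)).pow measurable_const)
  · rw [ae_restrict_iff' (hS₁m.prod hS₁m)]
    filter_upwards with w hw
    obtain ⟨⟨hx0, hx1⟩, ⟨hy0, hy1⟩⟩ := hw
    set x : ℝ := ‖w.1‖ with hxdef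
    set y : ℝ := ‖w.2‖ with hydef
    -- AM-GM with weights
    set a : ℝ := (1 - α * μ) / (2 * (1 - α)) with hadef
    set b : ℝ := (1 - (2 - μ) * α) / (2 * (1 - α)) with hbdef
    have ha : 0 ≤ a := div_nonneg (by linarith) (by linarith)
    have hb : 0 ≤ b := div_nonneg (by nlinarith) (by linarith)
    have hab : a + b = 1 := by
      rw [hadef, hbdef, ← add_div, div_eq_one_iff_eq (by linarith)]
      ring
    have am : (x ^ 2) ^ a * (y ^ 2) ^ b ≤ a * x ^ 2 + b * y ^ 2 :=
      Real.geom_mean_le_arith_mean2_weighted ha hb (sq_nonneg x) (sq_nonneg y) hab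
    have am2 : a * x ^ 2 + b * y ^ 2 ≤ x ^ 2 + y ^ 2 := by
      nlinarith [mul_nonneg hb (sq_nonneg x), mul_nonneg ha (sq_nonneg y)]
    have hpow : ((x ^ 2) ^ a * (y ^ 2) ^ b) ^ (1 - α) ≤ (x ^ 2 + y ^ 2) ^ (1 - α) :=
      Real.rpow_le_rpow (by positivity) (le_trans am am2) (le_of_lt h1α)
    have hx2 : (x : ℝ) ^ 2 = x ^ (2 : ℝ) := by
      rw [← Real.rpow_natCast x 2]; norm_num
    have hy2 : (y : ℝ) ^ 2 = y ^ (2 : ℝ) := by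
      rw [← Real.rpow_natCast y 2]; norm_num
    have e1 : 2 * a * (1 - α) = 1 - α * μ := by
      rw [hadef]; field_simp
    have e2 : 2 * b * (1 - α) = 1 - (2 - μ) * α := by
      rw [hbdef]; field_simp
    have hlhs : ((x ^ 2) ^ a * (y ^ 2) ^ b) ^ (1 - α)
        = x ^ (1 - α * μ) * y ^ (1 - (2 - μ) * α) := by
      rw [hx2, hy2, ← Real.rpow_mul hx0.le, ← Real.rpow_mul hy0.le,
        Real.mul_rpow (Real.rpow_nonneg hx0.le _) (Real.rpow_nonneg hy0.le _),
        ← Real.rpow_mul hx0.le, ← Real.rpow_mul hy0.le, ← e1, ← e2]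
    have keypow : x ^ (1 - α * μ) * y ^ (1 - (2 - μ) * α) ≤ (x ^ 2 + y ^ 2) ^ (1 - α) := by
      rw [← hlhs]; exact hpow
    have hposm : 0 < x ^ (1 - α * μ) * y ^ (1 - (2 - μ) * α) := by
      apply mul_pos (Real.rpow_pos_of_pos hx0 _) (Real.rpow_pos_of_pos hy0 _)
    have hZ : (x ^ 2 + y ^ 2) ^ (-(1 - α)) ≤ x ^ (α * μ - 1) * y ^ ((2 - μ) * α - 1) := by
      have hinv : ((x ^ 2 + y ^ 2) ^ (1 - α))⁻¹
          ≤ (x ^ (1 - α * μ) * y ^ (1 - (2 - μ) * α))⁻¹ :=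
        inv_anti₀ hposm keypow
      rw [Real.rpow_neg (by positivity)]
      calc ((x ^ 2 + y ^ 2) ^ (1 - α))⁻¹
          ≤ (x ^ (1 - α * μ) * y ^ (1 - (2 - μ) * α))⁻¹ := hinv
        _ = x ^ (α * μ - 1) * y ^ ((2 - μ) * α - 1) := by
            rw [mul_inv, ← Real.rpow_neg hx0.le, ← Real.rpow_neg hy0.le]
            ring_nf
    have hfinal : x ^ (-(2 * α * μ)) * y ^ (-((3 - μ) * α)) * (x ^ 2 + y ^ 2) ^ (-(1 - α))
        ≤ x ^ (-(1 + α * μ)) * y ^ (-(1 + α)) := by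
      calc x ^ (-(2 * α * μ)) * y ^ (-((3 - μ) * α)) * (x ^ 2 + y ^ 2) ^ (-(1 - α))
          ≤ x ^ (-(2 * α * μ)) * y ^ (-((3 - μ) * α)) * (x ^ (α * μ - 1) * y ^ ((2 - μ) * α - 1)) := by
            apply mul_le_mul_of_nonneg_left hZ
            exact mul_nonneg (Real.rpow_nonneg hx0.le _) (Real.rpow_nonneg hy0.le _)
        _ = (x ^ (-(2 * α * μ)) * x ^ (α * μ - 1)) * (y ^ (-((3 - μ) * α)) * y ^ ((2 - μ) * α - 1)) := by
            ring
        _ = x ^ (-(1 + α * μ)) * y ^ (-(1 + α)) := by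
            rw [← Real.rpow_add hx0, ← Real.rpow_add hy0]
            congr 1 <;> congr 1 <;> ring
    have hn1 : ‖x ^ (-(2 * α * μ)) * y ^ (-((3 - μ) * α)) * (x ^ 2 + y ^ 2) ^ (-(1 - α))‖
        = x ^ (-(2 * α * μ)) * y ^ (-((3 - μ) * α)) * (x ^ 2 + y ^ 2) ^ (-(1 - α)) := by
      rw [Real.norm_eq_abs, abs_of_nonneg]
      exact mul_nonneg (mul_nonneg (Real.rpow_nonneg hx0.le _) (Real.rpow_nonneg hy0.le _))
        (Real.rpow_nonneg (by positivity) _)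
    have hn2 : ‖x ^ (-(1 + α * μ)) * y ^ (-(1 + α))‖ = x ^ (-(1 + α * μ)) * y ^ (-(1 + α)) := by
      rw [Real.norm_eq_abs, abs_of_nonneg]
      exact mul_nonneg (Real.rpow_nonneg hx0.le _) (Real.rpow_nonneg hy0.le _)
    rw [hn1, hn2]
    exact hfinal
end

section
/- For every α > 1/3, the function (w₀, w₁) ↦ |w₀|^{−6α} · (|w₀|² + |w₁|²)^{α−1} is not integrable on the set {(w₀,w₁) ∈ ℂ² : 0 < |w₀| < 1, 0 < |w₁| < 1} with respect to Lebesgue measure on ℂ² (identifying ℂ² with ℝ⁴); its integral equals +∞. -/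
open MeasureTheory

lemma abs_rpow_neg_two_lintegral_top :
    ∫⁻ z in {z : ℂ | 0 < ‖z‖ ∧ ‖z‖ < 1},
      ENNReal.ofReal (‖z‖ ^ (-2 : ℝ)) = ⊤ := by
  set A : ℕ → Set ℂ := fun k =>
    Metric.ball 0 ((1/2 : ℝ)^k) \ Metric.ball 0 ((1/2 : ℝ)^(k+1)) with hA
  have hmeas : ∀ k, MeasurableSet (A k) :=
    fun k => measurableSet_ball.diff measurableSet_ball
  have habs : ∀ (z : ℂ) (r : ℝ), z ∈ Metric.ball 0 r ↔ ‖z‖ < r := by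
    intro z r
    rw [Metric.mem_ball, Complex.dist_eq, sub_zero]
  have hkey : ∀ i j, i < j → Disjoint (A i) (A j) := by
    intro i j hij
    rw [Set.disjoint_left]
    rintro z ⟨hi1, hi2⟩ ⟨hj1, hj2⟩
    apply hi2
    refine Metric.ball_subset_ball ?_ hj1
    exact pow_le_pow_of_le_one (by norm_num) (by norm_num) hij
  have hdisj : Pairwise (Function.onFun Disjoint A) := by
    intro i j hij
    rcases hij.lt_or_gt with h | h
    · exact hkey _ _ h
    · exact (hkey _ _ h).symm
  have hsub : ∀ k, A k ⊆ {z : ℂ | 0 < ‖z‖ ∧ ‖z‖ < 1} := by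
    intro k z hz
    obtain ⟨hz1, hz2⟩ := hz
    rw [habs] at hz1
    rw [habs] at hz2
    push_neg at hz2
    constructor
    · exact lt_of_lt_of_le (by positivity) hz2
    · exact lt_of_lt_of_le hz1 (pow_le_one₀ (by norm_num) (by norm_num))
  have hptwise : ∀ k, ∀ z ∈ A k,
      ENNReal.ofReal ((4:ℝ)^k) ≤ ENNReal.ofReal (‖z‖ ^ (-2 : ℝ)) := by
    intro k z hz
    obtain ⟨hz1, hz2⟩ := hz
    rw [habs] at hz1
    rw [habs] at hz2
    push_neg at hz2
    have hzpos : 0 < ‖z‖ := lt_of_lt_of_le (by positivity) hz2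
    apply ENNReal.ofReal_le_ofReal
    have h1 : ((1/2 : ℝ)^k) ^ (-2 : ℝ) ≤ ‖z‖ ^ (-2 : ℝ) :=
      Real.rpow_le_rpow_of_nonpos hzpos hz1.le (by norm_num)
    refine le_trans (le_of_eq ?_) h1
    have : ((1/2 : ℝ)^k) ^ (-2 : ℝ) = (((1/2 : ℝ)^k) ^ (2:ℕ))⁻¹ := by
      rw [Real.rpow_neg (by positivity), ← Real.rpow_natCast ((1/2:ℝ)^k) 2]
      norm_num
    rw [this, ← pow_mul, mul_comm k 2, pow_mul, ← inv_pow]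
    norm_num
  have hvol : ∀ k, ENNReal.ofReal ((4:ℝ)^k) * volume (A k)
      = ENNReal.ofReal (3/4 * Real.pi) := by
    intro k
    have hball : ∀ n : ℕ, volume (Metric.ball (0:ℂ) ((1/2:ℝ)^n))
        = ENNReal.ofReal (((1/2:ℝ)^n)^2 * Real.pi) := by
      intro n
      rw [Complex.volume_ball, ← ENNReal.ofReal_pow (by positivity),
        ENNReal.ofReal_mul (by positivity)]
      congr 1
      rw [← NNReal.coe_real_pi, ENNReal.ofReal_coe_nnreal]
    have hsubball : Metric.ball (0:ℂ) ((1/2:ℝ)^(k+1)) ⊆ Metric.ball 0 ((1/2:ℝ)^k) :=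
      Metric.ball_subset_ball (pow_le_pow_of_le_one (by norm_num) (by norm_num) (by omega))
    have hlt : volume (Metric.ball (0:ℂ) ((1/2:ℝ)^(k+1))) ≠ ⊤ := by
      rw [hball]; exact ENNReal.ofReal_ne_top
    rw [hA]
    rw [measure_diff hsubball measurableSet_ball.nullMeasurableSet hlt, hball, hball,
      ← ENNReal.ofReal_sub _ (by positivity), ← ENNReal.ofReal_mul (by positivity)]
    congr 1
    have h1 : ((1/2:ℝ)^k)^2 = (4:ℝ)⁻¹^k := by
      rw [← pow_mul, mul_comm k 2, pow_mul]; norm_num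
    have h2 : ((1/2:ℝ)^(k+1))^2 = (4:ℝ)⁻¹^k * 4⁻¹ := by
      rw [← pow_mul, mul_comm (k+1) 2, pow_mul, pow_succ]; norm_num
    have h3 : (4:ℝ)^k * 4⁻¹^k = 1 := by
      rw [← mul_pow]; norm_num
    calc (4:ℝ)^k * (((1/2:ℝ)^k)^2 * Real.pi - ((1/2:ℝ)^(k+1))^2 * Real.pi)
        = ((4:ℝ)^k * 4⁻¹^k) * (Real.pi - 4⁻¹ * Real.pi) := by rw [h1, h2]; ring
      _ = 3/4 * Real.pi := by rw [h3]; ring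
  have hg : Measurable fun z : ℂ => ENNReal.ofReal (‖z‖ ^ (-2 : ℝ)) :=
    (continuous_norm.measurable.pow_const _).ennreal_ofReal
  rw [eq_top_iff]
  calc (⊤ : ENNReal) = ∑' (_ : ℕ), ENNReal.ofReal (3/4 * Real.pi) := by
        rw [ENNReal.tsum_const_eq_top_of_ne_zero]
        simp only [ne_eq, ENNReal.ofReal_eq_zero, not_le]
        positivity
    _ = ∑' k : ℕ, ENNReal.ofReal ((4:ℝ)^k) * volume (A k) := by
        exact (tsum_congr hvol).symm
    _ = ∑' k : ℕ, ∫⁻ _ in A k, ENNReal.ofReal ((4:ℝ)^k) := by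
        refine tsum_congr fun k => ?_
        rw [setLIntegral_const]
    _ ≤ ∑' k : ℕ, ∫⁻ z in A k, ENNReal.ofReal (‖z‖ ^ (-2 : ℝ)) := by
        exact ENNReal.tsum_le_tsum fun k => setLIntegral_mono hg (hptwise k)
    _ = ∫⁻ z in ⋃ k, A k, ENNReal.ofReal (‖z‖ ^ (-2 : ℝ)) :=
        (lintegral_iUnion hmeas hdisj _).symm
    _ ≤ ∫⁻ z in {z : ℂ | 0 < ‖z‖ ∧ ‖z‖ < 1},
          ENNReal.ofReal (‖z‖ ^ (-2 : ℝ)) :=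
        lintegral_mono_set (Set.iUnion_subset hsub)


lemma ptbound (α : ℝ) (hα : 1 / 3 < α) {x y : ℝ} (hx0 : 0 < x) (hx1 : x < 1)
    (hy0 : 0 < y) (hy1 : y < 1) :
    min 1 ((2:ℝ) ^ (α - 1)) * x ^ (-2 : ℝ) ≤ x ^ (-(6 * α)) * (x ^ 2 + y ^ 2) ^ (α - 1) := by
  have hbpos : (0:ℝ) < x ^ 2 + y ^ 2 := by positivity
  rcases le_or_gt α 1 with h | h
  · have h1 : (x ^ 2 + y ^ 2 : ℝ) ^ (α - 1) ≥ (2:ℝ) ^ (α - 1) := by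
      refine Real.rpow_le_rpow_of_nonpos hbpos (by nlinarith) (by linarith)
    have h2 : x ^ (-2 : ℝ) ≤ x ^ (-(6 * α)) :=
      Real.rpow_le_rpow_of_exponent_ge hx0 hx1.le (by linarith)
    calc min 1 ((2:ℝ) ^ (α - 1)) * x ^ (-2 : ℝ)
        ≤ (2:ℝ) ^ (α - 1) * x ^ (-2 : ℝ) :=
          mul_le_mul_of_nonneg_right (min_le_right _ _) (Real.rpow_nonneg hx0.le _)
      _ ≤ (x ^ 2 + y ^ 2) ^ (α - 1) * x ^ (-(6 * α)) :=
          mul_le_mul h1 h2 (Real.rpow_nonneg hx0.le _) (Real.rpow_nonneg hbpos.le _)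
      _ = x ^ (-(6 * α)) * (x ^ 2 + y ^ 2) ^ (α - 1) := mul_comm _ _
  · have h1 : ((x ^ 2 : ℝ)) ^ (α - 1) ≤ (x ^ 2 + y ^ 2) ^ (α - 1) :=
      Real.rpow_le_rpow (by positivity) (by nlinarith) (by linarith)
    have h2 : ((x ^ 2 : ℝ)) ^ (α - 1) = x ^ (2 * (α - 1)) := by
      rw [← Real.rpow_natCast x 2, ← Real.rpow_mul hx0.le]
      norm_num
    have h4 : x ^ (-2 : ℝ) ≤ x ^ (-(6 * α) + 2 * (α - 1)) :=
      Real.rpow_le_rpow_of_exponent_ge hx0 hx1.le (by nlinarith)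
    calc min 1 ((2:ℝ) ^ (α - 1)) * x ^ (-2 : ℝ)
        ≤ 1 * x ^ (-2 : ℝ) :=
          mul_le_mul_of_nonneg_right (min_le_left _ _) (Real.rpow_nonneg hx0.le _)
      _ = x ^ (-2 : ℝ) := one_mul _
      _ ≤ x ^ (-(6 * α) + 2 * (α - 1)) := h4
      _ = x ^ (-(6 * α)) * x ^ (2 * (α - 1)) := Real.rpow_add hx0 _ _
      _ = x ^ (-(6 * α)) * ((x ^ 2 : ℝ)) ^ (α - 1) := by rw [h2]
      _ ≤ x ^ (-(6 * α)) * (x ^ 2 + y ^ 2) ^ (α - 1) :=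
          mul_le_mul_of_nonneg_left h1 (Real.rpow_nonneg hx0.le _)

theorem not_integrable_blowup_model (α : ℝ) (hα : 1 / 3 < α) :
    ¬ IntegrableOn
        (fun w : ℂ × ℂ =>
          ‖w.1‖ ^ (-(6 * α)) *
            (‖w.1‖ ^ 2 + ‖w.2‖ ^ 2) ^ (α - 1))
        {w : ℂ × ℂ | 0 < ‖w.1‖ ∧ ‖w.1‖ < 1 ∧
          0 < ‖w.2‖ ∧ ‖w.2‖ < 1} volume ∧
    ∫⁻ w in {w : ℂ × ℂ | 0 < ‖w.1‖ ∧ ‖w.1‖ < 1 ∧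
        0 < ‖w.2‖ ∧ ‖w.2‖ < 1},
      ENNReal.ofReal
        (‖w.1‖ ^ (-(6 * α)) *
          (‖w.1‖ ^ 2 + ‖w.2‖ ^ 2) ^ (α - 1)) = ⊤ := by
  set S₀ : Set ℂ := {z : ℂ | 0 < ‖z‖ ∧ ‖z‖ < 1} with hS₀
  set S : Set (ℂ × ℂ) := {w : ℂ × ℂ | 0 < ‖w.1‖ ∧ ‖w.1‖ < 1 ∧
      0 < ‖w.2‖ ∧ ‖w.2‖ < 1} with hSdef
  have hS : S = S₀ ×ˢ S₀ := by
    ext ⟨z1, z2⟩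
    simp only [hSdef, hS₀, Set.mem_setOf_eq, Set.mem_prod]
    tauto
  -- volume of S₀
  have hS₀eq : S₀ = Metric.ball (0:ℂ) 1 \ {0} := by
    ext z
    simp only [hS₀, Set.mem_setOf_eq, Set.mem_diff, Metric.mem_ball, Complex.dist_eq,
      sub_zero, Set.mem_singleton_iff]
    constructor
    · rintro ⟨h1, h2⟩
      exact ⟨h2, fun hz => by simp [hz] at h1⟩
    · rintro ⟨h1, h2⟩
      exact ⟨norm_pos_iff.mpr h2, h1⟩
  have hvolS₀ : volume S₀ = ENNReal.ofReal Real.pi := by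
    rw [hS₀eq, measure_diff_null (measure_singleton _), Complex.volume_ball]
    rw [← NNReal.coe_real_pi, ENNReal.ofReal_coe_nnreal]
    simp
  have hvolS₀0 : volume S₀ ≠ 0 := by
    rw [hvolS₀]
    simp only [ne_eq, ENNReal.ofReal_eq_zero, not_le]
    exact Real.pi_pos
  have hvolS₀top : volume S₀ ≠ ⊤ := by rw [hvolS₀]; exact ENNReal.ofReal_ne_top
  -- constant
  set c : ENNReal := ENNReal.ofReal (min 1 ((2:ℝ) ^ (α - 1))) with hc
  have hc0 : c ≠ 0 := by
    rw [hc]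
    simp only [ne_eq, ENNReal.ofReal_eq_zero, not_le, lt_min_iff]
    exact ⟨one_pos, Real.rpow_pos_of_pos two_pos _⟩
  have hctop : c ≠ ⊤ := ENNReal.ofReal_ne_top
  -- measurability of the integrand
  have m1 : Measurable fun w : ℂ × ℂ => ‖w.1‖ :=
    continuous_norm.measurable.comp measurable_fst
  have m2 : Measurable fun w : ℂ × ℂ => ‖w.2‖ :=
    continuous_norm.measurable.comp measurable_snd
  have hF : Measurable fun w : ℂ × ℂ =>
      ENNReal.ofReal (‖w.1‖ ^ (-(6 * α)) *
        (‖w.1‖ ^ 2 + ‖w.2‖ ^ 2) ^ (α - 1)) :=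
    ((m1.pow_const _).mul (((m1.pow_const 2).add (m2.pow_const 2)).pow_const _)).ennreal_ofReal
  have hg : Measurable fun z : ℂ => ENNReal.ofReal (‖z‖ ^ (-2 : ℝ)) :=
    (continuous_norm.measurable.pow_const _).ennreal_ofReal
  -- pointwise bound
  have hpt : ∀ w ∈ S, c * ENNReal.ofReal (‖w.1‖ ^ (-2 : ℝ)) ≤
      ENNReal.ofReal (‖w.1‖ ^ (-(6 * α)) *
        (‖w.1‖ ^ 2 + ‖w.2‖ ^ 2) ^ (α - 1)) := by
    rintro w ⟨h1, h2, h3, h4⟩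
    rw [hc, ← ENNReal.ofReal_mul (le_min zero_le_one (Real.rpow_nonneg two_pos.le _))]
    exact ENNReal.ofReal_le_ofReal (ptbound α hα h1 h2 h3 h4)
  -- the product integral
  have hprod : ∫⁻ w in S, ENNReal.ofReal (‖w.1‖ ^ (-2 : ℝ)) = ⊤ := by
    have hrestrict : (volume : Measure (ℂ × ℂ)).restrict (S₀ ×ˢ S₀) =
        (volume.restrict S₀).prod (volume.restrict S₀) := by
      rw [MeasureTheory.Measure.volume_eq_prod, Measure.prod_restrict]
    rw [hS, hrestrict]
    rw [lintegral_prod (fun w : ℂ × ℂ => ENNReal.ofReal (‖w.1‖ ^ (-2 : ℝ)))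
      ((hg.comp measurable_fst).aemeasurable)]
    simp only [lintegral_const, Measure.restrict_apply_univ]
    rw [lintegral_mul_const' _ _ hvolS₀top, abs_rpow_neg_two_lintegral_top,
      ENNReal.top_mul hvolS₀0]
  -- key divergence
  have key : ∫⁻ w in S, ENNReal.ofReal
      (‖w.1‖ ^ (-(6 * α)) *
        (‖w.1‖ ^ 2 + ‖w.2‖ ^ 2) ^ (α - 1)) = ⊤ := by
    rw [eq_top_iff]
    calc (⊤ : ENNReal) = c * ∫⁻ w in S, ENNReal.ofReal (‖w.1‖ ^ (-2 : ℝ)) := by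
          rw [hprod, ENNReal.mul_top hc0]
      _ = ∫⁻ w in S, c * ENNReal.ofReal (‖w.1‖ ^ (-2 : ℝ)) :=
          (lintegral_const_mul' c _ hctop).symm
      _ ≤ _ := setLIntegral_mono hF hpt
  refine ⟨fun hint => ?_, key⟩
  have hlt := hint.lintegral_lt_top
  rw [key] at hlt
  exact (lt_irrefl _ hlt)
end

section
/- For every α > 1/3, the integral over {(w₀,w₁) ∈ ℂ² : 0 < |w₀| < 1, 0 < |w₁| < 1} of the function (w₀,w₁) ↦ ((1+|w₀|²+|w₁|²)(1+|w₀|²)(|w₀|²+|w₁|²))^α · |w₀|^{−6α} · (1+|w₀|²+|w₁|²)^{−2} · (|w₀|²+|w₁|²)^{−1}, with respect to Lebesgue measure on ℂ², equals +∞. -/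
open MeasureTheory Metric Set
open scoped ENNReal NNReal

lemma abs_rpow_lintegral_top {p : ℝ} (hp : p ≤ -2) :
    ∫⁻ z in {z : ℂ | 0 < ‖z‖ ∧ ‖z‖ < 1},
      ENNReal.ofReal (‖z‖ ^ p) = ⊤ := by
  set r : ℕ → ℝ := fun n => (2⁻¹ : ℝ) ^ n with hr
  have hrpos : ∀ n, 0 < r n := fun n => by positivity
  have hrle1 : ∀ n, r n ≤ 1 := fun n =>
    pow_le_one₀ (by norm_num) (by norm_num)
  have hrmono : ∀ m n, m ≤ n → r n ≤ r m := fun m n h =>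
    pow_le_pow_of_le_one (by norm_num) (by norm_num) h
  set A : ℕ → Set ℂ := fun n => ball (0:ℂ) (r n) \ ball 0 (r (n+1)) with hA
  have hmeas : ∀ n, MeasurableSet (A n) := fun n =>
    measurableSet_ball.diff measurableSet_ball
  have key : ∀ m n, m < n → Disjoint (A m) (A n) := by
    intro m n h
    refine Set.disjoint_left.mpr ?_
    rintro z ⟨hz1, hz2⟩ ⟨hz1', _⟩
    exact hz2 (mem_ball_zero_iff.mpr (lt_of_lt_of_le (mem_ball_zero_iff.mp hz1')
      (hrmono (m+1) n (by omega))))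
  have hdisj : Pairwise (Function.onFun Disjoint A) := by
    intro m n hmn
    rcases lt_or_gt_of_ne hmn with h | h
    · exact key m n h
    · exact (key n m h).symm
  have hsub : (⋃ n, A n) ⊆ {z : ℂ | 0 < ‖z‖ ∧ ‖z‖ < 1} := by
    rintro z hz
    obtain ⟨n, hz1, hz2⟩ := Set.mem_iUnion.mp hz
    have h1 : ‖z‖ < r n := mem_ball_zero_iff.mp hz1
    have h2 : r (n+1) ≤ ‖z‖ := le_of_not_gt fun h => hz2 (mem_ball_zero_iff.mpr h)
    exact ⟨lt_of_lt_of_le (hrpos (n+1)) h2, lt_of_lt_of_le h1 (hrle1 n)⟩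
  have hπ : (NNReal.pi : ℝ≥0∞) = ENNReal.ofReal Real.pi := by
    rw [← NNReal.coe_real_pi, ENNReal.ofReal_coe_nnreal]
  have term : ∀ n : ℕ, ENNReal.ofReal (3/4 * Real.pi) ≤
      ∫⁻ z in A n, ENNReal.ofReal (‖z‖ ^ p) := by
    intro n
    have hlow : ∀ z ∈ A n, ENNReal.ofReal ((r n) ^ p) ≤
        ENNReal.ofReal (‖z‖ ^ p) := by
      rintro z ⟨hz1, hz2⟩
      have h1 : ‖z‖ < r n := by
        simpa using mem_ball_zero_iff.mp hz1
      have h2 : r (n+1) ≤ ‖z‖ := by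
        have := le_of_not_gt fun h => hz2 (mem_ball_zero_iff.mpr h)
        simpa using this
      have hzpos : 0 < ‖z‖ := lt_of_lt_of_le (hrpos (n+1)) h2
      exact ENNReal.ofReal_le_ofReal
        (Real.rpow_le_rpow_of_nonpos hzpos h1.le (by linarith))
    have hvol : volume (A n) = ENNReal.ofReal (3/4 * (r n)^2 * Real.pi) := by
      rw [hA]
      rw [measure_diff (ball_subset_ball (hrmono n (n+1) (by omega)))
        measurableSet_ball.nullMeasurableSet measure_ball_lt_top.ne]
      rw [Complex.volume_ball, Complex.volume_ball, hπ]
      rw [← ENNReal.ofReal_pow (hrpos n).le, ← ENNReal.ofReal_pow (hrpos (n+1)).le]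
      rw [← ENNReal.ofReal_mul (by positivity), ← ENNReal.ofReal_mul (by positivity)]
      rw [← ENNReal.ofReal_sub _ (by positivity)]
      congr 1
      have h4 : r (n+1) = r n / 2 := by simp [hr, pow_succ]; ring
      rw [h4]; ring
    calc ENNReal.ofReal (3/4 * Real.pi)
        ≤ ENNReal.ofReal ((r n)^p * (3/4 * (r n)^2 * Real.pi)) := by
          apply ENNReal.ofReal_le_ofReal
          have h2 : 1 ≤ (r n)^p * (r n)^(2:ℕ) := by
            rw [← Real.rpow_natCast (r n) 2, ← Real.rpow_add (hrpos n)]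
            exact Real.one_le_rpow_of_pos_of_le_one_of_nonpos (hrpos n) (hrle1 n)
              (by push_cast; linarith)
          nlinarith [Real.pi_pos, h2]
      _ = ENNReal.ofReal ((r n)^p) * volume (A n) := by
          rw [hvol, ← ENNReal.ofReal_mul (by positivity)]
      _ = ∫⁻ _ in A n, ENNReal.ofReal ((r n)^p) := by
          rw [setLIntegral_const]
      _ ≤ _ := setLIntegral_mono' (hmeas n) hlow
  have htop : (⊤ : ℝ≥0∞) ≤ ∫⁻ z in {z : ℂ | 0 < ‖z‖ ∧ ‖z‖ < 1},
      ENNReal.ofReal (‖z‖ ^ p) := by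
    calc (⊤ : ℝ≥0∞) = ∑' _ : ℕ, ENNReal.ofReal (3/4 * Real.pi) :=
          (ENNReal.tsum_const_eq_top_of_ne_zero
            (ENNReal.ofReal_pos.mpr (by positivity)).ne').symm
      _ ≤ ∑' n, ∫⁻ z in A n, ENNReal.ofReal (‖z‖ ^ p) :=
          ENNReal.tsum_le_tsum term
      _ = ∫⁻ z in ⋃ n, A n, ENNReal.ofReal (‖z‖ ^ p) :=
          (lintegral_iUnion hmeas hdisj _).symm
      _ ≤ _ := lintegral_mono_set hsub
  exact top_le_iff.mp htop
lemma pointwise_bound {α a b : ℝ} (hα : 1/3 < α) (ha : 0 < a) (ha1 : a < 1)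
    (hb : 0 < b) (hb1 : b < 1) :
    min 1 (2^(α-1)) / 9 * a ^ (2 * max (α-1) 0 - 6*α) ≤
      ((1+a^2+b^2)*(1+a^2)*(a^2+b^2))^α * a^(-(6*α)) *
        (1+a^2+b^2)^(-(2:ℝ)) * (a^2+b^2)^(-(1:ℝ)) := by
  have hα0 : 0 < α := by linarith
  set x : ℝ := a^2 + b^2 with hxdef
  have hx : 0 < x := by positivity
  have hx2 : x ≤ 2 := by nlinarith
  set u : ℝ := 1 + x with hudef
  have hu1 : (1:ℝ) ≤ u := by simp [hudef]; positivity
  have hu3 : u ≤ 3 := by simp [hudef]; linarith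
  have hu0 : 0 < u := by linarith
  -- rewrite RHS
  have hsplit : ((1+a^2+b^2)*(1+a^2)*(a^2+b^2))^α = u^α * (1+a^2)^α * x^α := by
    rw [show (1+a^2+b^2) = u by rw [hudef, hxdef]; ring]
    rw [Real.mul_rpow (by positivity) hx.le, Real.mul_rpow hu0.le (by positivity)]
  have hneg2 : (1+a^2+b^2)^(-(2:ℝ)) = (u^(2:ℕ))⁻¹ := by
    rw [show (1+a^2+b^2) = u by rw [hudef, hxdef]; ring]
    rw [Real.rpow_neg hu0.le, Real.rpow_two]
  have hneg1 : (x:ℝ)^(-(1:ℝ)) = x⁻¹ := Real.rpow_neg_one x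
  rw [hsplit, hneg2, hneg1]
  -- key bound for x-part
  have hxα : x^α * x⁻¹ = x^(α-1) := by
    rw [Real.rpow_sub hx, Real.rpow_one]; rfl
  have hkey : min 1 (2^(α-1)) * a^(2 * max (α-1) 0) ≤ x^(α-1) := by
    rcases le_total α 1 with h | h
    · rw [max_eq_right (by linarith : α - 1 ≤ 0), mul_zero, Real.rpow_zero, mul_one]
      calc min (1:ℝ) (2^(α-1)) ≤ (2:ℝ)^(α-1) := min_le_right _ _
        _ ≤ x^(α-1) := Real.rpow_le_rpow_of_nonpos hx hx2 (by linarith)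
    · rw [max_eq_left (by linarith : (0:ℝ) ≤ α - 1)]
      calc min 1 (2^(α-1)) * a^(2*(α-1)) ≤ 1 * a^(2*(α-1)) := by
            apply mul_le_mul_of_nonneg_right (min_le_left _ _)
            positivity
        _ = (a^(2:ℕ))^(α-1) := by
            rw [one_mul, ← Real.rpow_natCast a 2, ← Real.rpow_mul ha.le]
            norm_num
        _ ≤ x^(α-1) := by
            apply Real.rpow_le_rpow (by positivity) _ (by linarith)
            nlinarith
  have h9 : (9:ℝ)⁻¹ ≤ (u^(2:ℕ))⁻¹ := by
    apply inv_anti₀ (by positivity)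
    nlinarith
  have hu' : (1:ℝ) ≤ u^α := Real.one_le_rpow hu1 hα0.le
  have ha2 : (1:ℝ) ≤ (1+a^2)^α := Real.one_le_rpow (by nlinarith) hα0.le
  calc min 1 (2^(α-1)) / 9 * a ^ (2 * max (α-1) 0 - 6*α)
      = 1 * 1 * (min 1 (2^(α-1)) * a^(2 * max (α-1) 0)) * a^(-(6*α)) * (9:ℝ)⁻¹ := by
        rw [show 2 * max (α-1) 0 - 6*α = 2 * max (α-1) 0 + -(6*α) by ring,
          Real.rpow_add ha]
        ring
    _ ≤ u^α * (1+a^2)^α * (x^(α-1)) * a^(-(6*α)) * (u^(2:ℕ))⁻¹ := by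
        have h0 : (0:ℝ) < min 1 (2^(α-1)) := by
          apply lt_min one_pos; positivity
        gcongr
    _ = u^α * (1+a^2)^α * x^α * a^(-(6*α)) * (u^(2:ℕ))⁻¹ * x⁻¹ := by
        rw [← hxα]; ring
theorem lintegral_limit_potential_eq_top (α : ℝ) (hα : 1 / 3 < α) :
    ∫⁻ w in {w : ℂ × ℂ | 0 < ‖w.1‖ ∧ ‖w.1‖ < 1 ∧
        0 < ‖w.2‖ ∧ ‖w.2‖ < 1},
      ENNReal.ofReal
        (((1 + ‖w.1‖ ^ 2 + ‖w.2‖ ^ 2) *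
              (1 + ‖w.1‖ ^ 2) *
              (‖w.1‖ ^ 2 + ‖w.2‖ ^ 2)) ^ α *
          ‖w.1‖ ^ (-(6 * α)) *
          (1 + ‖w.1‖ ^ 2 + ‖w.2‖ ^ 2) ^ (-(2 : ℝ)) *
          (‖w.1‖ ^ 2 + ‖w.2‖ ^ 2) ^ (-(1 : ℝ))) = ⊤ := by
  set p : ℝ := 2 * max (α-1) 0 - 6*α with hpdef
  set c : ℝ := min 1 (2^(α-1)) / 9 with hcdef
  have hc : 0 < c := by
    rw [hcdef]
    have : (0:ℝ) < min 1 (2^(α-1)) := lt_min one_pos (by positivity)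
    positivity
  have hple : p ≤ -2 := by
    rcases le_total α 1 with h | h
    · rw [hpdef, max_eq_right (by linarith : α - 1 ≤ 0)]; linarith
    · rw [hpdef, max_eq_left (by linarith : (0:ℝ) ≤ α - 1)]; linarith
  set A' : Set ℂ := {z : ℂ | 0 < ‖z‖ ∧ ‖z‖ < 1} with hA'def
  have hA'm : MeasurableSet A' := by
    have : A' = (fun z : ℂ => ‖z‖) ⁻¹' (Set.Ioo 0 1) := rfl
    rw [this]
    exact continuous_norm.measurable measurableSet_Ioo
  have hS : {w : ℂ × ℂ | 0 < ‖w.1‖ ∧ ‖w.1‖ < 1 ∧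
      0 < ‖w.2‖ ∧ ‖w.2‖ < 1} = A' ×ˢ A' := by
    ext ⟨z, w⟩
    simp [hA'def, Set.mem_prod, and_assoc]
  have hfm : Measurable fun z : ℂ => ENNReal.ofReal (‖z‖ ^ p) :=
    (continuous_norm.measurable.pow measurable_const).ennreal_ofReal
  have hvolA' : volume A' = (NNReal.pi : ℝ≥0∞) := by
    have h1 : A' = Metric.ball (0:ℂ) 1 \ {0} := by
      ext z
      simp only [hA'def, Set.mem_setOf_eq, Set.mem_diff, Metric.mem_ball,
        Complex.dist_eq, sub_zero, Set.mem_singleton_iff]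
      constructor
      · rintro ⟨h1, h2⟩; exact ⟨h2, by intro h; simp [h] at h1⟩
      · rintro ⟨h1, h2⟩; exact ⟨norm_pos_iff.mpr h2, h1⟩
    rw [h1, measure_diff_null (measure_singleton _), Complex.volume_ball]
    simp
  have hprod : ∫⁻ w in A' ×ˢ A', ENNReal.ofReal (‖w.1‖ ^ p) = ⊤ := by
    rw [Measure.volume_eq_prod, ← Measure.prod_restrict]
    have h1 : ∫⁻ (w : ℂ × ℂ), ENNReal.ofReal (‖w.1‖ ^ p)
        ∂((volume.restrict A').prod (volume.restrict A')) =
        ∫⁻ w, (fun z => ENNReal.ofReal (‖z‖ ^ p)) w.1 * (fun _ : ℂ => (1:ℝ≥0∞)) w.2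
        ∂((volume.restrict A').prod (volume.restrict A')) := by
      apply lintegral_congr; intro w; simp
    rw [h1, lintegral_prod_mul hfm.aemeasurable aemeasurable_const, lintegral_one,
      Measure.restrict_apply_univ, hvolA', hA'def, abs_rpow_lintegral_top hple,
      ENNReal.top_mul (by simp [NNReal.pi_ne_zero])]
  have hbound : ∀ w ∈ A' ×ˢ A',
      ENNReal.ofReal c * ENNReal.ofReal (‖w.1‖ ^ p) ≤
      ENNReal.ofReal
        (((1 + ‖w.1‖ ^ 2 + ‖w.2‖ ^ 2) *
              (1 + ‖w.1‖ ^ 2) *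
              (‖w.1‖ ^ 2 + ‖w.2‖ ^ 2)) ^ α *
          ‖w.1‖ ^ (-(6 * α)) *
          (1 + ‖w.1‖ ^ 2 + ‖w.2‖ ^ 2) ^ (-(2 : ℝ)) *
          (‖w.1‖ ^ 2 + ‖w.2‖ ^ 2) ^ (-(1 : ℝ))) := by
    rintro ⟨z, w⟩ ⟨⟨hz0, hz1⟩, ⟨hw0, hw1⟩⟩
    rw [← ENNReal.ofReal_mul hc.le]
    exact ENNReal.ofReal_le_ofReal (pointwise_bound hα hz0 hz1 hw0 hw1)
  have htop : (⊤ : ℝ≥0∞) ≤ _ := calc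
    (⊤ : ℝ≥0∞) = ENNReal.ofReal c * ∫⁻ w in A' ×ˢ A',
        ENNReal.ofReal (‖w.1‖ ^ p) := by
      rw [hprod, ENNReal.mul_top (by simpa using hc)]
    _ = ∫⁻ w in A' ×ˢ A',
        ENNReal.ofReal c * ENNReal.ofReal (‖w.1‖ ^ p) :=
      (lintegral_const_mul' _ _ ENNReal.ofReal_ne_top).symm
    _ ≤ ∫⁻ w in A' ×ˢ A', ENNReal.ofReal
        (((1 + ‖w.1‖ ^ 2 + ‖w.2‖ ^ 2) *
              (1 + ‖w.1‖ ^ 2) *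
              (‖w.1‖ ^ 2 + ‖w.2‖ ^ 2)) ^ α *
          ‖w.1‖ ^ (-(6 * α)) *
          (1 + ‖w.1‖ ^ 2 + ‖w.2‖ ^ 2) ^ (-(2 : ℝ)) *
          (‖w.1‖ ^ 2 + ‖w.2‖ ^ 2) ^ (-(1 : ℝ))) :=
      setLIntegral_mono' (hA'm.prod hA'm) hbound
  rw [hS]
  exact top_le_iff.mp htop
end

section
/- For every α > 1/3, the integrals I(ε) = ∫_{0<|w₀|<1, 0<|w₁|<1} ( |w₀|⁶ / ((1+|w₀|²+|w₁|²)(1+|w₀|²)(|w₀|²+|w₁|²)) + ε )^{−α} · (1+|w₀|²+|w₁|²)^{−2} · (|w₀|²+|w₁|²)^{−1} dλ (Lebesgue measure λ on ℂ²) tend to +∞ as ε → 0⁺; that is, lim_{ε→0⁺} I(ε) = +∞. -/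
open MeasureTheory

/-- `I(ε)`: the integral of the `ε`-regularized test potential density on the
patch near the blown-up point. -/
noncomputable def Ifun (α ε : ℝ) : ENNReal :=
  ∫⁻ w in {w : ℂ × ℂ | 0 < ‖w.1‖ ∧ ‖w.1‖ < 1 ∧
      0 < ‖w.2‖ ∧ ‖w.2‖ < 1},
    ENNReal.ofReal
      ((‖w.1‖ ^ 6 /
            ((1 + ‖w.1‖ ^ 2 + ‖w.2‖ ^ 2) *
              (1 + ‖w.1‖ ^ 2) *
              (‖w.1‖ ^ 2 + ‖w.2‖ ^ 2)) + ε) ^ (-α) *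
        (1 + ‖w.1‖ ^ 2 + ‖w.2‖ ^ 2) ^ (-(2 : ℝ)) *
        (‖w.1‖ ^ 2 + ‖w.2‖ ^ 2) ^ (-(1 : ℝ)))

set_option maxHeartbeats 1000000 in
theorem tendsto_Ifun_top (α : ℝ) (hα : 1 / 3 < α) :
    Filter.Tendsto (fun ε : ℝ => Ifun α ε) (nhdsWithin 0 (Set.Ioi 0))
      (nhds ⊤) := by
  have hαpos : 0 < α := lt_trans (by norm_num) hα
  set K : ℝ := (2:ℝ) ^ (-α) * (3:ℝ) ^ (-(2:ℝ)) * (2:ℝ) ^ (-(1:ℝ)) *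
      (4:ℝ) ^ (-(1/3:ℝ)) * Real.pi ^ 2 / 1024 with hKdef
  have hπ : 0 < Real.pi := Real.pi_pos
  have hKpos : 0 < K := by positivity
  -- main lower bound
  have hmain : ∀ ε : ℝ, ε ∈ Set.Ioo (0:ℝ) 4 →
      ENNReal.ofReal (K * ε ^ ((1:ℝ)/3 - α)) ≤ Ifun α ε := by
    intro ε hε
    obtain ⟨hε0, hε4⟩ := hε
    set δ : ℝ := (ε/4) ^ ((1:ℝ)/6) with hδdef
    have hδpos : 0 < δ := Real.rpow_pos_of_pos (by linarith) _
    have hδle : δ ≤ 1 := Real.rpow_le_one (by linarith) (by linarith) (by norm_num)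
    have hδ6 : δ ^ 6 = ε / 4 := by
      rw [hδdef, ← Real.rpow_natCast ((ε/4) ^ ((1:ℝ)/6)) 6,
        ← Real.rpow_mul (by linarith : (0:ℝ) ≤ ε/4)]
      norm_num
    set c : ℝ := (2*ε) ^ (-α) * (3:ℝ) ^ (-(2:ℝ)) * (2:ℝ) ^ (-(1:ℝ)) with hcdef
    have hcpos : 0 < c := by positivity
    set A : Set ℂ := Metric.ball ((δ/2 : ℝ) : ℂ) (δ/4) with hAdef
    set B : Set ℂ := Metric.ball ((3/4 : ℝ) : ℂ) (1/8) with hBdef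
    -- bounds on elements of A and B
    have hA : ∀ z : ℂ, z ∈ A → δ/4 < ‖z‖ ∧ ‖z‖ < 3*δ/4 := by
      intro z hz
      rw [hAdef, Metric.mem_ball, Complex.dist_eq] at hz
      have h1 : |‖z‖ - ‖((δ/2 : ℝ) : ℂ)‖| ≤ ‖z - ((δ/2:ℝ):ℂ)‖ :=
        abs_norm_sub_norm_le z _
      rw [Complex.norm_real, Real.norm_eq_abs, abs_of_pos (by linarith : (0:ℝ) < δ/2)] at h1
      rw [abs_le] at h1
      constructor <;> linarith [h1.1, h1.2]
    have hB : ∀ z : ℂ, z ∈ B → 5/8 < ‖z‖ ∧ ‖z‖ < 7/8 := by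
      intro z hz
      rw [hBdef, Metric.mem_ball, Complex.dist_eq] at hz
      have h1 : |‖z‖ - ‖((3/4 : ℝ) : ℂ)‖| ≤ ‖z - ((3/4:ℝ):ℂ)‖ :=
        abs_norm_sub_norm_le z _
      rw [Complex.norm_real, Real.norm_eq_abs, abs_of_pos (by norm_num : (0:ℝ) < 3/4)] at h1
      rw [abs_le] at h1
      constructor <;> linarith [h1.1, h1.2]
    -- R ⊆ S
    have hRS : A ×ˢ B ⊆ {w : ℂ × ℂ | 0 < ‖w.1‖ ∧ ‖w.1‖ < 1 ∧
        0 < ‖w.2‖ ∧ ‖w.2‖ < 1} := by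
      rintro ⟨z₁, z₂⟩ ⟨hz₁, hz₂⟩
      obtain ⟨ha1, ha2⟩ := hA z₁ hz₁
      obtain ⟨hb1, hb2⟩ := hB z₂ hz₂
      exact ⟨by linarith, by linarith, by linarith, by linarith⟩
    -- pointwise lower bound on A ×ˢ B
    have hpt : ∀ w : ℂ × ℂ, w ∈ A ×ˢ B →
        ENNReal.ofReal c ≤ ENNReal.ofReal
          ((‖w.1‖ ^ 6 /
              ((1 + ‖w.1‖ ^ 2 + ‖w.2‖ ^ 2) *
                (1 + ‖w.1‖ ^ 2) *
                (‖w.1‖ ^ 2 + ‖w.2‖ ^ 2)) + ε) ^ (-α) *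
            (1 + ‖w.1‖ ^ 2 + ‖w.2‖ ^ 2) ^ (-(2:ℝ)) *
            (‖w.1‖ ^ 2 + ‖w.2‖ ^ 2) ^ (-(1:ℝ))) := by
      rintro ⟨z₁, z₂⟩ ⟨hz₁, hz₂⟩
      obtain ⟨ha1, ha2⟩ := hA z₁ hz₁
      obtain ⟨hb1, hb2⟩ := hB z₂ hz₂
      set a : ℝ := ‖z₁‖ with hadef
      set b : ℝ := ‖z₂‖ with hbdef
      have ha0 : 0 < a := by linarith
      have hb0 : 0 < b := by linarith
      have ha1' : a < 1 := by linarith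
      have hb1' : b < 1 := by linarith
      apply ENNReal.ofReal_le_ofReal
      set F : ℝ := a ^ 6 / ((1 + a^2 + b^2) * (1 + a^2) * (a^2 + b^2)) with hFdef
      have hD : (1:ℝ)/4 ≤ (1 + a^2 + b^2) * (1 + a^2) * (a^2 + b^2) := by
        have hD1 : (1:ℝ) ≤ (1 + a^2 + b^2) * (1 + a^2) := by nlinarith [sq_nonneg a, sq_nonneg b]
        have hD2 := mul_le_mul_of_nonneg_right hD1 (by positivity : (0:ℝ) ≤ a^2 + b^2)
        have hD3 : (1:ℝ)/4 ≤ a^2 + b^2 := by nlinarith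
        rw [one_mul] at hD2
        linarith
      have hF0 : 0 ≤ F := by positivity
      have hFle : F ≤ ε := by
        have h1 : F ≤ a ^ 6 / (1/4) :=
          div_le_div_of_nonneg_left (by positivity) (by norm_num) hD
        have h2 : a ^ 6 ≤ δ ^ 6 := pow_le_pow_left₀ ha0.le (by linarith) 6
        rw [hδ6] at h2
        have h3 : a ^ 6 / (1/4) = 4 * a ^ 6 := by ring
        rw [h3] at h1
        linarith
      have e1 : (2*ε) ^ (-α) ≤ (F + ε) ^ (-α) :=
        Real.rpow_le_rpow_of_nonpos (by linarith) (by linarith) (by linarith)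
      have e2 : (3:ℝ) ^ (-(2:ℝ)) ≤ (1 + a^2 + b^2) ^ (-(2:ℝ)) :=
        Real.rpow_le_rpow_of_nonpos (by nlinarith) (by nlinarith) (by norm_num)
      have e3 : (2:ℝ) ^ (-(1:ℝ)) ≤ (a^2 + b^2) ^ (-(1:ℝ)) :=
        Real.rpow_le_rpow_of_nonpos (by nlinarith) (by nlinarith) (by norm_num)
      have p1 : (0:ℝ) ≤ (2*ε) ^ (-α) := by positivity
      have p2 : (0:ℝ) ≤ (3:ℝ) ^ (-(2:ℝ)) := by positivity
      have p3 : (0:ℝ) ≤ (2:ℝ) ^ (-(1:ℝ)) := by positivity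
      have q1 : (0:ℝ) ≤ (F + ε) ^ (-α) := Real.rpow_nonneg (by linarith) _
      have q2 : (0:ℝ) ≤ (1 + a^2 + b^2) ^ (-(2:ℝ)) := Real.rpow_nonneg (by nlinarith) _
      calc c = (2*ε) ^ (-α) * (3:ℝ) ^ (-(2:ℝ)) * (2:ℝ) ^ (-(1:ℝ)) := hcdef
        _ ≤ (F + ε) ^ (-α) * (1 + a^2 + b^2) ^ (-(2:ℝ)) * (a^2 + b^2) ^ (-(1:ℝ)) := by
            apply mul_le_mul (mul_le_mul e1 e2 p2 q1) e3 p3 (by positivity)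
    -- measurability of the rectangle
    have hRmeas : MeasurableSet (A ×ˢ B) :=
      (measurableSet_ball).prod (measurableSet_ball)
    -- chain of inequalities
    have hvol : volume (A ×ˢ B) =
        ENNReal.ofReal ((δ/4)^2 * Real.pi) * ENNReal.ofReal ((1/8:ℝ)^2 * Real.pi) := by
      rw [Measure.volume_eq_prod, Measure.prod_prod, hAdef, hBdef,
        Complex.volume_ball, Complex.volume_ball]
      rw [ENNReal.ofReal_mul (by positivity), ENNReal.ofReal_mul (by positivity),
        ← ENNReal.ofReal_pow (by positivity), ← ENNReal.ofReal_pow (by norm_num),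
        ← NNReal.coe_real_pi, ENNReal.ofReal_coe_nnreal]
    have hchain : ENNReal.ofReal c * volume (A ×ˢ B) ≤ Ifun α ε := by
      calc ENNReal.ofReal c * volume (A ×ˢ B)
          = ∫⁻ _ in A ×ˢ B, ENNReal.ofReal c := (setLIntegral_const _ _).symm
        _ ≤ ∫⁻ w in A ×ˢ B, ENNReal.ofReal
              ((‖w.1‖ ^ 6 /
                  ((1 + ‖w.1‖ ^ 2 + ‖w.2‖ ^ 2) *
                    (1 + ‖w.1‖ ^ 2) *
                    (‖w.1‖ ^ 2 + ‖w.2‖ ^ 2)) + ε) ^ (-α) *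
                (1 + ‖w.1‖ ^ 2 + ‖w.2‖ ^ 2) ^ (-(2:ℝ)) *
                (‖w.1‖ ^ 2 + ‖w.2‖ ^ 2) ^ (-(1:ℝ))) :=
            setLIntegral_mono' hRmeas hpt
        _ ≤ Ifun α ε := lintegral_mono_set hRS
    -- identify the constant
    have hδ2 : δ ^ 2 = ε ^ ((1:ℝ)/3) * (4:ℝ) ^ (-(1/3:ℝ)) := by
      rw [hδdef, ← Real.rpow_natCast ((ε/4) ^ ((1:ℝ)/6)) 2,
        ← Real.rpow_mul (by linarith : (0:ℝ) ≤ ε/4)]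
      norm_num
      rw [Real.div_rpow hε0.le (by norm_num), Real.rpow_neg (by norm_num), div_eq_mul_inv]
    have hcmul : (2*ε) ^ (-α) = (2:ℝ) ^ (-α) * ε ^ (-α) :=
      Real.mul_rpow (by norm_num) hε0.le
    have hsplit : ε ^ (-α) * ε ^ ((1:ℝ)/3) = ε ^ ((1:ℝ)/3 - α) := by
      rw [← Real.rpow_add hε0]; ring_nf
    have hKeq : K * ε ^ ((1:ℝ)/3 - α) = c * ((δ/4)^2 * Real.pi) * ((1/8:ℝ)^2 * Real.pi) := by
      rw [hcdef, hcmul, div_pow, hδ2, hKdef, ← hsplit]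
      ring
    calc ENNReal.ofReal (K * ε ^ ((1:ℝ)/3 - α))
        = ENNReal.ofReal (c * ((δ/4)^2 * Real.pi) * ((1/8:ℝ)^2 * Real.pi)) := by rw [hKeq]
      _ = ENNReal.ofReal c * (ENNReal.ofReal ((δ/4)^2 * Real.pi) *
            ENNReal.ofReal ((1/8:ℝ)^2 * Real.pi)) := by
          rw [ENNReal.ofReal_mul (by positivity), ENNReal.ofReal_mul hcpos.le, mul_assoc]
      _ = ENNReal.ofReal c * volume (A ×ˢ B) := by rw [hvol]
      _ ≤ Ifun α ε := hchain
  -- the lower bound tends to ⊤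
  have htend : Filter.Tendsto (fun ε : ℝ => ENNReal.ofReal (K * ε ^ ((1:ℝ)/3 - α)))
      (nhdsWithin 0 (Set.Ioi 0)) (nhds ⊤) := by
    have h1 : Filter.Tendsto (fun ε : ℝ => ε⁻¹) (nhdsWithin 0 (Set.Ioi 0)) Filter.atTop :=
      tendsto_inv_nhdsGT_zero
    have h2 : Filter.Tendsto (fun x : ℝ => K * x ^ (α - 1/3)) Filter.atTop Filter.atTop :=
      (tendsto_rpow_atTop (by linarith : (0:ℝ) < α - 1/3)).const_mul_atTop hKpos
    have h3 := (ENNReal.tendsto_ofReal_atTop.comp h2).comp h1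
    refine h3.congr' ?_
    filter_upwards [self_mem_nhdsWithin] with ε (hε : ε ∈ Set.Ioi 0)
    have hε0 : (0:ℝ) < ε := hε
    simp only [Function.comp]
    congr 1
    congr 1
    rw [← Real.rpow_neg_one ε, ← Real.rpow_mul hε0.le]
    congr 1
    ring
  refine tendsto_nhds_top_mono htend ?_
  filter_upwards [Filter.inter_mem self_mem_nhdsWithin
    (eventually_nhdsWithin_of_eventually_nhds (eventually_lt_nhds (by norm_num : (0:ℝ) < 4)))]
    with ε hε
  exact hmain ε ⟨hε.1, hε.2⟩
end
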